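/- For a standard Gaussian vector Z in ℝ^d and any t ∈ (0, √d), P(|‖Z‖ − √d| ≥ t) ≤ 2·exp(−c·t²) for an absolute constant c > 0 (concentration of the norm near the sphere of radius √d). -/

import Mathlib

open MeasureTheory ProbabilityTheory Real
open scoped ENNReal NNReal

lemma gauss_pdf_mul {l : ℝ} (x : ℝ) :
    gaussianPDFReal 0 1 x * Real.exp (l * x ^ 2)
      = (Real.sqrt (2 * π))⁻¹ * Real.exp (-(1/2 - l) * x ^ 2) := by
  simp only [gaussianPDFReal]
  rw [mul_assoc, ← Real.exp_add]
  norm_num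
  left
  ring_nf

lemma gauss_sq_integrable {l : ℝ} (hl : l < 1/2) :
    Integrable (fun x => Real.exp (l * x ^ 2)) (gaussianReal 0 1) := by
  rw [gaussianReal_of_var_ne_zero 0 one_ne_zero]
  have hmeas : Measurable fun x => (gaussianPDFReal 0 1 x).toNNReal :=
    (measurable_gaussianPDFReal 0 1).real_toNNReal
  have hd : gaussianPDF 0 1 = fun x => ((gaussianPDFReal 0 1 x).toNNReal : ℝ≥0∞) := rfl
  rw [hd, integrable_withDensity_iff_integrable_coe_smul hmeas]
  have : (fun x => ((gaussianPDFReal 0 1 x).toNNReal : ℝ) • Real.exp (l * x ^ 2))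
      = fun x => (Real.sqrt (2 * π))⁻¹ * Real.exp (-(1/2 - l) * x ^ 2) := by
    funext x
    rw [smul_eq_mul, Real.coe_toNNReal _ (gaussianPDFReal_nonneg 0 1 x), gauss_pdf_mul]
  rw [this]
  exact (integrable_exp_neg_mul_sq (by linarith)).const_mul _

lemma gauss_sq_integral {l : ℝ} (hl : l < 1/2) :
    ∫ x, Real.exp (l * x ^ 2) ∂(gaussianReal 0 1)
      = Real.sqrt (1 / (1 - 2 * l)) := by
  rw [gaussianReal_of_var_ne_zero 0 one_ne_zero]
  have hmeas : Measurable fun x => (gaussianPDFReal 0 1 x).toNNReal :=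
    (measurable_gaussianPDFReal 0 1).real_toNNReal
  have hd : gaussianPDF 0 1 = fun x => ((gaussianPDFReal 0 1 x).toNNReal : ℝ≥0∞) := rfl
  rw [hd, integral_withDensity_eq_integral_smul hmeas]
  have : (fun x => ((gaussianPDFReal 0 1 x).toNNReal : ℝ≥0) • Real.exp (l * x ^ 2))
      = fun x => (Real.sqrt (2 * π))⁻¹ * Real.exp (-(1/2 - l) * x ^ 2) := by
    funext x
    rw [NNReal.smul_def, smul_eq_mul, Real.coe_toNNReal _ (gaussianPDFReal_nonneg 0 1 x),
      gauss_pdf_mul]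
  rw [this, integral_const_mul, integral_gaussian]
  have hb : (0:ℝ) < 1/2 - l := by linarith
  rw [show (2:ℝ) * π = π * 2 by ring, ← Real.sqrt_inv, ← Real.sqrt_mul (by positivity)]
  congr 1
  field_simp

lemma gauss_sq_integral_le {l : ℝ} (hl : |l| ≤ 1/6) :
    ∫ x, Real.exp (l * x ^ 2) ∂(gaussianReal 0 1) ≤ Real.exp (l + 3 * l ^ 2) := by
  rw [abs_le] at hl
  obtain ⟨hl1, hl2⟩ := hl
  rw [gauss_sq_integral (by linarith)]
  have h2l : (0:ℝ) < 1 - 2 * l := by linarith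
  have key : 1 / (1 - 2 * l) ≤ Real.exp (l + 3 * l ^ 2) ^ 2 := by
    rw [← Real.exp_nat_mul]
    have hE : 1 + (2 * l + 6 * l ^ 2) ≤ Real.exp ((2:ℕ) * (l + 3 * l ^ 2)) := by
      have h := Real.add_one_le_exp (2 * l + 6 * l ^ 2)
      have : ((2:ℕ):ℝ) * (l + 3 * l ^ 2) = 2 * l + 6 * l ^ 2 := by push_cast; ring
      rw [this]
      linarith
    rw [div_le_iff₀ h2l]
    nlinarith [Real.exp_pos ((2:ℕ) * (l + 3 * l ^ 2)), mul_le_mul_of_nonneg_left hE h2l.le]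
  calc Real.sqrt (1 / (1 - 2 * l)) ≤ Real.sqrt (Real.exp (l + 3 * l ^ 2) ^ 2) :=
        Real.sqrt_le_sqrt key
    _ = Real.exp (l + 3 * l ^ 2) := Real.sqrt_sq (Real.exp_pos _).le

lemma pi_mgf (d : ℕ) {l : ℝ} (hl : l < 1/2) :
    Integrable (fun z : Fin d → ℝ => Real.exp (l * ∑ i, z i ^ 2))
      (Measure.pi fun _ => gaussianReal 0 1) ∧
    ∫ z : Fin d → ℝ, Real.exp (l * ∑ i, z i ^ 2) ∂(Measure.pi fun _ => gaussianReal 0 1)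
      = (∫ x, Real.exp (l * x ^ 2) ∂(gaussianReal 0 1)) ^ d := by
  letI : MeasureSpace ℝ := ⟨gaussianReal 0 1⟩
  haveI : SigmaFinite (volume : Measure ℝ) :=
    (inferInstance : SigmaFinite (gaussianReal 0 1))
  have hfun : (fun z : Fin d → ℝ => Real.exp (l * ∑ i, z i ^ 2))
      = fun z : Fin d → ℝ => ∏ i, Real.exp (l * z i ^ 2) := by
    funext z
    rw [Finset.mul_sum, Real.exp_sum]
  have hmeq : (Measure.pi fun _ : Fin d => gaussianReal 0 1) = (volume : Measure (Fin d → ℝ)) :=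
    rfl
  rw [hfun, hmeq]
  constructor
  · exact Integrable.fintype_prod (f := fun _ : Fin d => fun x : ℝ => Real.exp (l * x ^ 2))
      (fun i => gauss_sq_integrable hl)
  · rw [← hmeq, MeasureTheory.integral_fintype_prod_eq_pow (fun x : ℝ => Real.exp (l * x ^ 2)),
      Fintype.card_fin]

set_option maxHeartbeats 1000000

/-- Concentration of the norm of a standard Gaussian vector near the sphere
of radius `√d`: there is an absolute constant `c > 0` such that for every dimension `d`
and every `t ∈ (0, √d)`, `P(|‖Z‖ − √d| ≥ t) ≤ 2·exp(−c·t²)`. -/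
theorem stmt3 :
    ∃ c : ℝ, 0 < c ∧ ∀ (d : ℕ) (t : ℝ), 0 < t → t < Real.sqrt d →
      (Measure.pi fun _ : Fin d => gaussianReal 0 1)
          {z : Fin d → ℝ | t ≤ |Real.sqrt (∑ i, z i ^ 2) - Real.sqrt d|}
        ≤ ENNReal.ofReal (2 * Real.exp (-c * t ^ 2)) := by
  refine ⟨1/12, by norm_num, fun d t ht htd => ?_⟩
  set μd := Measure.pi fun _ : Fin d => gaussianReal 0 1 with hμd
  haveI : IsProbabilityMeasure μd := by rw [hμd]; infer_instance
  set s := Real.sqrt d with hs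
  have hs0 : 0 < s := lt_trans ht htd
  have hs2 : s ^ 2 = (d:ℝ) := Real.sq_sqrt (Nat.cast_nonneg d)
  set l := t / (6 * s) with hldef
  have hl0 : 0 < l := by positivity
  have hl6 : l ≤ 1/6 := by
    rw [hldef, div_le_iff₀ (by positivity)]
    nlinarith
  have habs : |l| ≤ 1/6 := by rw [abs_of_pos hl0]; exact hl6
  have habs' : |(-l)| ≤ 1/6 := by rwa [abs_neg]
  set S := fun z : Fin d → ℝ => ∑ i, z i ^ 2 with hSdef
  obtain ⟨hintp, hvalp⟩ := pi_mgf d (l := l) (by linarith)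
  obtain ⟨hintm, hvalm⟩ := pi_mgf d (l := -l) (by linarith)
  have hpow : ∀ l' : ℝ, |l'| ≤ 1/6 →
      (∫ x, Real.exp (l' * x ^ 2) ∂(gaussianReal 0 1)) ^ d
        ≤ Real.exp ((l' + 3 * l' ^ 2) * d) := by
    intro l' hl'
    calc (∫ x, Real.exp (l' * x ^ 2) ∂(gaussianReal 0 1)) ^ d
        ≤ Real.exp (l' + 3 * l' ^ 2) ^ d :=
          pow_le_pow_left₀ (integral_nonneg fun x => (Real.exp_pos _).le)
            (gauss_sq_integral_le hl') d
      _ = Real.exp ((l' + 3 * l' ^ 2) * d) := by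
          rw [← Real.exp_nat_mul, mul_comm]
  have hA := measure_ge_le_exp_mul_mgf (μ := μd) (X := S) (t := l) ((d:ℝ) + t * s)
    hl0.le hintp
  have hB := measure_le_le_exp_mul_mgf (μ := μd) (X := S) (t := -l) ((d:ℝ) - t * s)
    (neg_nonpos.mpr hl0.le) hintm
  have hmgfp : mgf S μd l = (∫ x, Real.exp (l * x ^ 2) ∂(gaussianReal 0 1)) ^ d := hvalp
  have hmgfm : mgf S μd (-l) = (∫ x, Real.exp (-l * x ^ 2) ∂(gaussianReal 0 1)) ^ d := hvalm
  have hexpA : Real.exp (-l * ((d:ℝ) + t * s)) * Real.exp ((l + 3 * l ^ 2) * d)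
      = Real.exp (-(1/12) * t ^ 2) := by
    rw [← Real.exp_add]
    congr 1
    rw [← hs2, hldef]
    field_simp
    ring
  have hexpB : Real.exp (-(-l) * ((d:ℝ) - t * s)) * Real.exp ((-l + 3 * (-l) ^ 2) * d)
      = Real.exp (-(1/12) * t ^ 2) := by
    rw [← Real.exp_add]
    congr 1
    rw [← hs2, hldef]
    field_simp
    ring
  have hA' : (μd {z | (d:ℝ) + t * s ≤ S z}).toReal ≤ Real.exp (-(1/12) * t ^ 2) := by
    refine hA.trans ?_
    rw [← hexpA, hmgfp]
    exact mul_le_mul_of_nonneg_left (hpow l habs) (Real.exp_pos _).le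
  have hB' : (μd {z | S z ≤ (d:ℝ) - t * s}).toReal ≤ Real.exp (-(1/12) * t ^ 2) := by
    refine hB.trans ?_
    rw [← hexpB, hmgfm]
    exact mul_le_mul_of_nonneg_left (hpow (-l) habs') (Real.exp_pos _).le
  have hsub : {z : Fin d → ℝ | t ≤ |Real.sqrt (∑ i, z i ^ 2) - s|}
      ⊆ {z | (d:ℝ) + t * s ≤ S z} ∪ {z | S z ≤ (d:ℝ) - t * s} := by
    intro z hz
    simp only [Set.mem_setOf_eq, Set.mem_union] at hz ⊢
    have hSnn : 0 ≤ S z := Finset.sum_nonneg fun i _ => sq_nonneg _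
    have hsqS : Real.sqrt (S z) ^ 2 = S z := Real.sq_sqrt hSnn
    have hsqSnn : 0 ≤ Real.sqrt (S z) := Real.sqrt_nonneg _
    rcases le_abs.mp hz with h | h
    · left
      have h1 : s + t ≤ Real.sqrt (S z) := by
        have : Real.sqrt (S z) = Real.sqrt (∑ i, z i ^ 2) := by rw [hSdef]
        rw [this]; linarith
      have h2 : (s + t) ^ 2 ≤ Real.sqrt (S z) ^ 2 :=
        pow_le_pow_left₀ (by positivity) h1 2
      rw [hsqS] at h2
      have h3 : (d:ℝ) + t * s ≤ (s + t) ^ 2 := by nlinarith [mul_pos ht hs0, sq_nonneg t]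
      linarith
    · right
      have h1 : Real.sqrt (S z) ≤ s - t := by
        have : Real.sqrt (S z) = Real.sqrt (∑ i, z i ^ 2) := by rw [hSdef]
        rw [this]; linarith
      have h2 : Real.sqrt (S z) ^ 2 ≤ (s - t) ^ 2 := pow_le_pow_left₀ hsqSnn h1 2
      rw [hsqS] at h2
      have h3 : (s - t) ^ 2 ≤ (d:ℝ) - t * s := by
        nlinarith [mul_le_mul_of_nonneg_left htd.le ht.le]
      linarith
  calc μd {z : Fin d → ℝ | t ≤ |Real.sqrt (∑ i, z i ^ 2) - s|}
      ≤ μd ({z | (d:ℝ) + t * s ≤ S z} ∪ {z | S z ≤ (d:ℝ) - t * s}) := measure_mono hsub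
    _ ≤ μd {z | (d:ℝ) + t * s ≤ S z} + μd {z | S z ≤ (d:ℝ) - t * s} := measure_union_le _ _
    _ ≤ ENNReal.ofReal (Real.exp (-(1/12) * t ^ 2))
        + ENNReal.ofReal (Real.exp (-(1/12) * t ^ 2)) := by
        gcongr
        · rw [← ENNReal.ofReal_toReal (measure_ne_top μd _)]
          exact ENNReal.ofReal_le_ofReal hA'
        · rw [← ENNReal.ofReal_toReal (measure_ne_top μd _)]
          exact ENNReal.ofReal_le_ofReal hB'
    _ = ENNReal.ofReal (2 * Real.exp (-(1/12) * t ^ 2)) := by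
        rw [← ENNReal.ofReal_add (Real.exp_pos _).le (Real.exp_pos _).le, two_mul]
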